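/- arXiv:2002.08151 — 4 statements merged into one kernel-verified Lean document; each statement's English description precedes it below -/
import Mathlib

section
/- The 7×6 integer matrix M whose rows are (0,1,0,0,1,0), (1,0,0,0,0,1), (1,0,0,1,0,0), (0,1,1,0,0,0), (0,0,1,0,0,1), (0,0,0,1,1,0), (1,-1,1,-1,1,-1) has zero nullity; that is, the linear map ℤ^6 → ℤ^7 given by x ↦ M·x is injective, so for any x, y ∈ ℤ^6 with M·x = M·y one has x = y. -/
/-- The 7×6 integer matrix of equation (13) of the paper has zero nullity:
the linear map `ℤ^6 → ℤ^7` given by `x ↦ M ⬝ x` is injective, i.e. whenever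
`M ⬝ x = M ⬝ y` one has `x = y`. -/
theorem matrix_13_injective :
    Function.Injective (fun x : Fin 6 → ℤ =>
      (!![0, 1, 0, 0, 1, 0;
          1, 0, 0, 0, 0, 1;
          1, 0, 0, 1, 0, 0;
          0, 1, 1, 0, 0, 0;
          0, 0, 1, 0, 0, 1;
          0, 0, 0, 1, 1, 0;
          1, -1, 1, -1, 1, -1] : Matrix (Fin 7) (Fin 6) ℤ).mulVec x) := by
  intro x y h
  obtain ⟨a0, a1, a2, a3, a4, a5, rfl⟩ :
      ∃ a0 a1 a2 a3 a4 a5 : ℤ, x = ![a0, a1, a2, a3, a4, a5] :=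
    ⟨x 0, x 1, x 2, x 3, x 4, x 5, by funext i; fin_cases i <;> rfl⟩
  obtain ⟨b0, b1, b2, b3, b4, b5, rfl⟩ :
      ∃ b0 b1 b2 b3 b4 b5 : ℤ, y = ![b0, b1, b2, b3, b4, b5] :=
    ⟨y 0, y 1, y 2, y 3, y 4, y 5, by funext i; fin_cases i <;> rfl⟩
  simp only at h
  simp [Matrix.cons_mulVec, Matrix.cons_dotProduct, Matrix.dotProduct_of_isEmpty,
    Matrix.empty_mulVec, Matrix.head_cons, Matrix.tail_cons, funext_iff,
    Fin.forall_fin_succ] at h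
  have e0 : a0 = b0 := by omega
  have e1 : a1 = b1 := by omega
  have e2 : a2 = b2 := by omega
  have e3 : a3 = b3 := by omega
  have e4 : a4 = b4 := by omega
  have e5 : a5 = b5 := by omega
  subst e0 e1 e2 e3 e4 e5
  rfl
end

section
/- For all natural numbers m, n, k, every integer matrix A : Matrix (Fin m) (Fin n) ℤ and every integer matrix B : Matrix (Fin k) (Fin n) ℤ, the set {B.mulVec (fun j => (x j : ℤ)) | x : Fin n → ℕ, A.mulVec (fun j => (x j : ℤ)) = 0} is a finitely generated additive submonoid of Fin k → ℤ. -/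
open Set Finset

/-- Dickson's lemma, specialized to `Fin n → ℕ`. -/
private lemma pi_nat_isPWO {n : ℕ} (s : Set (Fin n → ℕ)) : s.IsPWO :=
  Set.isPWO_of_wellQuasiOrderedLE s

/-- Gordan-type lemma: a submonoid of `Fin n → ℕ` that is closed under truncated
subtraction of dominated elements is finitely generated. -/
private lemma full_submonoid_fg {n : ℕ} (M : AddSubmonoid (Fin n → ℕ))
    (hfull : ∀ x ∈ M, ∀ y ∈ M, x ≤ y → y - x ∈ M) : M.FG := by
  classical
  set T : Set (Fin n → ℕ) := {x | x ∈ M ∧ x ≠ 0} with hT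
  set G : Set (Fin n → ℕ) := {x ∈ T | ∀ y ∈ T, y ≤ x → y = x} with hG
  have hGfin : G.Finite := by
    refine IsAntichain.finite_of_partiallyWellOrderedOn (r := (· ≤ ·)) ?_ (pi_nat_isPWO G)
    intro a ha b hb hne hle
    exact hne (hb.2 a ha.1 hle)
  have key : ∀ N (x : Fin n → ℕ), (∑ i, x i) ≤ N → x ∈ M →
      x ∈ AddSubmonoid.closure G := by
    intro N
    induction N with
    | zero =>
      intro x hx _
      have hx0 : x = 0 := by
        funext i
        have h1 : x i ≤ ∑ j, x j :=
          Finset.single_le_sum (f := x) (fun j _ => Nat.zero_le _) (Finset.mem_univ i)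
        show x i = 0
        omega
      rw [hx0]
      exact AddSubmonoid.zero_mem _
    | succ N ih =>
      intro x hx hxM
      by_cases h0 : x = 0
      · rw [h0]; exact AddSubmonoid.zero_mem _
      · set s : Set (Fin n → ℕ) := {y | y ∈ T ∧ y ≤ x} with hs
        have hswf : s.IsWF := (pi_nat_isPWO s).isWF
        have hne : s.Nonempty := ⟨x, ⟨hxM, h0⟩, le_refl x⟩
        set g := hswf.min hne with hgdef
        have hgs : g ∈ s := hswf.min_mem hne
        have hgG : g ∈ G := by
          refine ⟨hgs.1, fun z hz hzg => ?_⟩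
          by_contra hne'
          exact hswf.not_lt_min hne ⟨hz, hzg.trans hgs.2⟩ (lt_of_le_of_ne hzg hne')
        have hgle : g ≤ x := hgs.2
        have hxg : x - g ∈ M := hfull g hgs.1.1 x hxM hgle
        have hdecomp : g + (x - g) = x := by
          funext i
          exact Nat.add_sub_cancel' (hgle i)
        have hsum : (∑ i, (x - g) i) ≤ N := by
          have hgpos : 1 ≤ ∑ i, g i := by
            obtain ⟨i, hi⟩ := Function.ne_iff.1 hgs.1.2
            have h1 : g i ≤ ∑ j, g j :=
              Finset.single_le_sum (fun j _ => Nat.zero_le _) (Finset.mem_univ i)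
            have h2 : g i ≠ 0 := hi
            omega
          have hsplit : (∑ i, g i) + (∑ i, (x - g) i) = ∑ i, x i := by
            rw [← Finset.sum_add_distrib]
            exact Finset.sum_congr rfl fun i _ => by
              have := congrFun hdecomp i
              simpa using this
          omega
        have h1 : (x - g) ∈ AddSubmonoid.closure G := ih (x - g) hsum hxg
        have h2 : g ∈ AddSubmonoid.closure G := AddSubmonoid.subset_closure hgG
        have h3 := AddSubmonoid.add_mem _ h2 h1
        rwa [hdecomp] at h3
  refine ⟨hGfin.toFinset, ?_⟩
  rw [hGfin.coe_toFinset]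
  refine le_antisymm (AddSubmonoid.closure_le.2 fun g hg => hg.1.1) ?_
  intro x hx
  exact key (∑ i, x i) x le_rfl hx

/-- The abstract core of Proposition 14.1: the image under an integer linear map
`B` of the monoid of nonnegative integer solutions of a homogeneous integer
linear system `A ⬝ x = 0` is a finitely generated additive submonoid of
`Fin k → ℤ`. -/
theorem image_of_nonneg_solutions_fg (m n k : ℕ)
    (A : Matrix (Fin m) (Fin n) ℤ) (B : Matrix (Fin k) (Fin n) ℤ) :
    ∃ S : AddSubmonoid (Fin k → ℤ),
      (S : Set (Fin k → ℤ)) =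
        {y : Fin k → ℤ | ∃ x : Fin n → ℕ,
          A.mulVec (fun j => (x j : ℤ)) = 0 ∧
          B.mulVec (fun j => (x j : ℤ)) = y} ∧ S.FG := by
  classical
  have cast_add : ∀ x y : Fin n → ℕ,
      (fun j => (((x + y) j : ℕ) : ℤ)) =
        (fun j => ((x j : ℕ) : ℤ)) + (fun j => ((y j : ℕ) : ℤ)) := by
    intro x y; funext j; exact_mod_cast Nat.cast_add _ _
  have cast_zero : (fun j => (((0 : Fin n → ℕ) j : ℕ) : ℤ)) = (0 : Fin n → ℤ) := by
    funext j; simp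
  let M : AddSubmonoid (Fin n → ℕ) :=
    { carrier := {x | A.mulVec (fun j => (x j : ℤ)) = 0}
      zero_mem' := by
        show A.mulVec (fun j => (((0 : Fin n → ℕ) j : ℕ) : ℤ)) = 0
        rw [cast_zero, Matrix.mulVec_zero]
      add_mem' := by
        intro a b ha hb
        show A.mulVec (fun j => (((a + b) j : ℕ) : ℤ)) = 0
        rw [cast_add, Matrix.mulVec_add, ha, hb, add_zero] }
  let φ : (Fin n → ℕ) →+ (Fin k → ℤ) :=
    { toFun := fun x => B.mulVec (fun j => (x j : ℤ))
      map_zero' := by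
        show B.mulVec (fun j => (((0 : Fin n → ℕ) j : ℕ) : ℤ)) = 0
        rw [cast_zero, Matrix.mulVec_zero]
      map_add' := fun x y => by
        show B.mulVec (fun j => (((x + y) j : ℕ) : ℤ)) = _
        rw [cast_add, Matrix.mulVec_add] }
  have hMfg : M.FG := by
    refine full_submonoid_fg M ?_
    intro x hx y hy hxy
    have hdecomp : (y - x) + x = y := by
      funext i; exact Nat.sub_add_cancel (hxy i)
    have h1 : A.mulVec (fun j => ((((y - x) + x) j : ℕ) : ℤ)) = 0 := by
      rw [hdecomp]; exact hy
    rw [cast_add, Matrix.mulVec_add, hx, add_zero] at h1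
    exact h1
  refine ⟨M.map φ, ?_, hMfg.map φ⟩
  ext y
  simp only [AddSubmonoid.coe_map, Set.mem_image, SetLike.mem_coe, Set.mem_setOf_eq]
  constructor
  · rintro ⟨x, hx, rfl⟩
    exact ⟨x, hx, rfl⟩
  · rintro ⟨x, hx, rfl⟩
    exact ⟨x, hx, rfl⟩
end

section
/- For g₁, g₂ in the special linear group SL(3, ℂ), the first column of g₁ equals the first column of g₂ and the third row of g₁⁻¹ equals the third row of g₂⁻¹ if and only if g₁⁻¹ * g₂ is upper triangular with all diagonal entries equal to 1. -/
/-- Fibers of the flag-encoding map: `g₁, g₂ ∈ SL(3,ℂ)` have the same first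
column and the same third row of their inverses iff `g₁⁻¹ * g₂` is upper
triangular with all diagonal entries equal to `1` (i.e. `g₁` and `g₂` lie in
the same left coset of the standard maximal unipotent subgroup `U`). -/
theorem sl3_same_flag_iff_unipotent (g₁ g₂ : Matrix.SpecialLinearGroup (Fin 3) ℂ) :
    ((∀ i, (g₁ : Matrix (Fin 3) (Fin 3) ℂ) i 0 =
           (g₂ : Matrix (Fin 3) (Fin 3) ℂ) i 0) ∧
     (∀ j, ((g₁⁻¹ : Matrix.SpecialLinearGroup (Fin 3) ℂ) :
             Matrix (Fin 3) (Fin 3) ℂ) 2 j =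
           ((g₂⁻¹ : Matrix.SpecialLinearGroup (Fin 3) ℂ) :
             Matrix (Fin 3) (Fin 3) ℂ) 2 j)) ↔
    (((g₁⁻¹ * g₂ : Matrix.SpecialLinearGroup (Fin 3) ℂ) :
        Matrix (Fin 3) (Fin 3) ℂ) 1 0 = 0 ∧
     ((g₁⁻¹ * g₂ : Matrix.SpecialLinearGroup (Fin 3) ℂ) :
        Matrix (Fin 3) (Fin 3) ℂ) 2 0 = 0 ∧
     ((g₁⁻¹ * g₂ : Matrix.SpecialLinearGroup (Fin 3) ℂ) :
        Matrix (Fin 3) (Fin 3) ℂ) 2 1 = 0 ∧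
     ((g₁⁻¹ * g₂ : Matrix.SpecialLinearGroup (Fin 3) ℂ) :
        Matrix (Fin 3) (Fin 3) ℂ) 0 0 = 1 ∧
     ((g₁⁻¹ * g₂ : Matrix.SpecialLinearGroup (Fin 3) ℂ) :
        Matrix (Fin 3) (Fin 3) ℂ) 1 1 = 1 ∧
     ((g₁⁻¹ * g₂ : Matrix.SpecialLinearGroup (Fin 3) ℂ) :
        Matrix (Fin 3) (Fin 3) ℂ) 2 2 = 1) := by
  -- abbreviations
  set A₁ : Matrix (Fin 3) (Fin 3) ℂ := (g₁ : Matrix (Fin 3) (Fin 3) ℂ) with hA₁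
  set A₂ : Matrix (Fin 3) (Fin 3) ℂ := (g₂ : Matrix (Fin 3) (Fin 3) ℂ) with hA₂
  set B₁ : Matrix (Fin 3) (Fin 3) ℂ := ((g₁⁻¹ : Matrix.SpecialLinearGroup (Fin 3) ℂ) : Matrix (Fin 3) (Fin 3) ℂ) with hB₁
  set B₂ : Matrix (Fin 3) (Fin 3) ℂ := ((g₂⁻¹ : Matrix.SpecialLinearGroup (Fin 3) ℂ) : Matrix (Fin 3) (Fin 3) ℂ) with hB₂
  have hM : ((g₁⁻¹ * g₂ : Matrix.SpecialLinearGroup (Fin 3) ℂ) : Matrix (Fin 3) (Fin 3) ℂ)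
      = B₁ * A₂ := by
    simp [hB₁, hA₂]
  set M : Matrix (Fin 3) (Fin 3) ℂ := B₁ * A₂ with hMdef
  rw [hM]
  have k1 : B₁ * A₁ = 1 := by
    rw [hB₁, hA₁, ← Matrix.SpecialLinearGroup.coe_mul, inv_mul_cancel g₁]; rfl
  have k1' : A₁ * B₁ = 1 := by
    rw [hB₁, hA₁, ← Matrix.SpecialLinearGroup.coe_mul, mul_inv_cancel g₁]; rfl
  have k2 : B₂ * A₂ = 1 := by
    rw [hB₂, hA₂, ← Matrix.SpecialLinearGroup.coe_mul, inv_mul_cancel g₂]; rfl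
  constructor
  · rintro ⟨hc, hr⟩
    -- first column of M is e₀
    have col : ∀ i, M i 0 = (1 : Matrix (Fin 3) (Fin 3) ℂ) i 0 := by
      intro i
      rw [← k1]
      simp only [hMdef, Matrix.mul_apply]
      exact Finset.sum_congr rfl fun k _ => by rw [hc k]
    -- third row of M is e₂
    have row : ∀ j, M 2 j = (1 : Matrix (Fin 3) (Fin 3) ℂ) 2 j := by
      intro j
      rw [← k2]
      simp only [hMdef, Matrix.mul_apply]
      exact Finset.sum_congr rfl fun k _ => by rw [hr k]
    have c00 := col 0
    have c10 := col 1
    have c20 := col 2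
    have r21 := row 1
    have r22 := row 2
    simp [Matrix.one_apply] at c00 c10 c20 r21 r22
    have hd : M.det = 1 := by
      rw [← hM]
      exact (g₁⁻¹ * g₂).prop
    rw [Matrix.det_fin_three, c00, c10, c20, r21, r22] at hd
    refine ⟨c10, c20, r21, c00, ?_, r22⟩
    linear_combination hd
  · rintro ⟨e10, e20, e21, e00, e11, e22⟩
    constructor
    · intro i
      have : A₂ = A₁ * M := by
        rw [hMdef, ← Matrix.mul_assoc, k1', Matrix.one_mul]
      rw [this]
      simp [Matrix.mul_apply, Fin.sum_univ_three, e10, e20, e00]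
    · intro j
      set N : Matrix (Fin 3) (Fin 3) ℂ :=
        (((g₁⁻¹ * g₂)⁻¹ : Matrix.SpecialLinearGroup (Fin 3) ℂ) : Matrix (Fin 3) (Fin 3) ℂ) with hN
      have nm : N * M = 1 := by
        rw [hN, ← hM, ← Matrix.SpecialLinearGroup.coe_mul, inv_mul_cancel]; rfl
      have n20 : N 2 0 = 0 := by
        have := congrFun (congrFun nm 2) 0
        simpa [Matrix.mul_apply, Fin.sum_univ_three, e10, e20, e00, Matrix.one_apply] using this
      have n21 : N 2 1 = 0 := by
        have := congrFun (congrFun nm 2) 1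
        simp [Matrix.mul_apply, Fin.sum_univ_three, e21, e11, n20, Matrix.one_apply] at this
        exact this
      have n22 : N 2 2 = 1 := by
        have := congrFun (congrFun nm 2) 2
        simpa [Matrix.mul_apply, Fin.sum_univ_three, e22, n20, n21, Matrix.one_apply] using this
      have hB₂' : B₂ = N * B₁ := by
        rw [hB₂, hN, hB₁, ← Matrix.SpecialLinearGroup.coe_mul]
        congr 1
        group
        rfl
      rw [hB₂']
      simp [Matrix.mul_apply, Fin.sum_univ_three, n20, n21, n22]
end

section
/- Let U be the subgroup of SL(3, ℂ) consisting of upper triangular matrices with all diagonal entries equal to 1. The map sending g ∈ SL(3, ℂ) to the pair (first column of g, third row of g⁻¹) descends to the left-coset space SL(3, ℂ) / U and induces a bijection from SL(3, ℂ) / U onto the set {(v, f) : v, f : Fin 3 → ℂ, v ≠ 0, f ≠ 0, ∑ i, f i * v i = 0}. -/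
open Matrix

namespace SL3FlagAux

abbrev SL3 := Matrix.SpecialLinearGroup (Fin 3) ℂ

/-- the linear functional `x ↦ ∑ i, f i * x i`. -/
noncomputable def lf (f : Fin 3 → ℂ) : (Fin 3 → ℂ) →ₗ[ℂ] ℂ where
  toFun x := ∑ i, f i * x i
  map_add' x y := by simp [mul_add, Finset.sum_add_distrib]
  map_smul' c x := by
    simp only [Pi.smul_apply, smul_eq_mul, RingHom.id_apply, Finset.mul_sum]
    exact Finset.sum_congr rfl fun i _ => by ring

lemma coe_mul_inv (g : SL3) :
    (g : Matrix (Fin 3) (Fin 3) ℂ) * ((g⁻¹ : SL3) : Matrix (Fin 3) (Fin 3) ℂ) = 1 := by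
  rw [← Matrix.SpecialLinearGroup.coe_mul, mul_inv_cancel, Matrix.SpecialLinearGroup.coe_one]

lemma coe_inv_mul (g : SL3) :
    ((g⁻¹ : SL3) : Matrix (Fin 3) (Fin 3) ℂ) * (g : Matrix (Fin 3) (Fin 3) ℂ) = 1 := by
  rw [← Matrix.SpecialLinearGroup.coe_mul, inv_mul_cancel, Matrix.SpecialLinearGroup.coe_one]

lemma entry_of_eq_one {A B : Matrix (Fin 3) (Fin 3) ℂ} (h : A * B = 1) (i j : Fin 3) :
    A i 0 * B 0 j + A i 1 * B 1 j + A i 2 * B 2 j = if i = j then 1 else 0 := by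
  have := congrFun (congrFun h i) j
  rwa [Matrix.mul_apply, Fin.sum_univ_three, Matrix.one_apply] at this

lemma exists_rep (v f : Fin 3 → ℂ) (hv : v ≠ 0) (hf : f ≠ 0)
    (hfv : ∑ i, f i * v i = 0) :
    ∃ g : SL3, (∀ i, (g : Matrix (Fin 3) (Fin 3) ℂ) i 0 = v i) ∧
      (∀ j, ((g⁻¹ : SL3) : Matrix (Fin 3) (Fin 3) ℂ) 2 j = f j) := by
  obtain ⟨i0, hi0⟩ : ∃ i, f i ≠ 0 := Function.ne_iff.mp hf
  set x : Fin 3 → ℂ := fun j => if j = i0 then (f i0)⁻¹ else 0 with hxdef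
  have hfx : ∑ i, f i * x i = 1 := by
    simp [hxdef, mul_ite, Finset.sum_ite_eq', mul_inv_cancel₀ hi0]
  -- the kernel of `lf f` is 2-dimensional
  have hrange : LinearMap.range (lf f) = ⊤ := by
    rw [LinearMap.range_eq_top]
    intro c
    refine ⟨c • x, ?_⟩
    have : lf f (c • x) = c * lf f x := by
      simp [lf]
    rw [this]
    show c * (∑ i, f i * x i) = c
    rw [hfx, mul_one]
  have hK2 : Module.finrank ℂ (LinearMap.ker (lf f)) = 2 := by
    have h1 := LinearMap.finrank_range_add_finrank_ker (lf f)
    rw [hrange, finrank_top, Module.finrank_self, Module.finrank_fin_fun] at h1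
    omega
  have hvK : v ∈ LinearMap.ker (lf f) := by
    rw [LinearMap.mem_ker]; exact hfv
  have hlt : Submodule.span ℂ {v} < LinearMap.ker (lf f) := by
    refine lt_of_le_of_ne ?_ ?_
    · rwa [Submodule.span_singleton_le_iff_mem]
    · intro h
      have := finrank_span_singleton (K := ℂ) hv
      rw [h, hK2] at this
      omega
  obtain ⟨w, hwK, hwv⟩ := SetLike.exists_of_lt hlt
  have hfw : ∑ i, f i * w i = 0 := hwK
  -- determinant of the matrix with rows v, w, x is nonzero
  set d : ℂ := (Matrix.of ![v, w, x]).det with hddef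
  have hd : d ≠ 0 := by
    intro h0
    obtain ⟨c, hcne, hc⟩ := Matrix.exists_vecMul_eq_zero_iff.mpr h0
    have hcj : ∀ j : Fin 3, c 0 * v j + c 1 * w j + c 2 * x j = 0 := by
      intro j
      have := congrFun hc j
      simpa [Matrix.vecMul, dotProduct, Fin.sum_univ_three] using this
    rw [Fin.sum_univ_three] at hfv hfw hfx
    have h0' := hcj 0; have h1' := hcj 1; have h2' := hcj 2
    have hc2 : c 2 = 0 := by
      linear_combination f 0 * h0' + f 1 * h1' + f 2 * h2' - c 0 * hfv - c 1 * hfw - c 2 * hfx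
    by_cases hc1 : c 1 = 0
    · have hc0 : c 0 = 0 := by
        obtain ⟨j, hj⟩ : ∃ j, v j ≠ 0 := Function.ne_iff.mp hv
        have := hcj j
        rw [hc1, hc2] at this
        simpa [hj] using this
      exact hcne (funext fun j => by fin_cases j <;> assumption)
    · apply hwv
      rw [Submodule.mem_span_singleton]
      refine ⟨-(c 0 / c 1), funext fun j => ?_⟩
      have := hcj j
      rw [hc2] at this
      simp only [Pi.smul_apply, smul_eq_mul]
      have h1 : c 1 * (c 1)⁻¹ = 1 := mul_inv_cancel₀ hc1
      linear_combination (-(c 1)⁻¹) * this + (w j) * h1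
  -- rescale `w` so that the determinant is 1
  have hfw' : ∑ i, f i * (d⁻¹ • w) i = 0 := by
    simp only [Pi.smul_apply, smul_eq_mul]
    rw [Fin.sum_univ_three] at hfw ⊢
    linear_combination d⁻¹ * hfw
  have hdet1 : (Matrix.of ![v, d⁻¹ • w, x]).det = 1 := by
    have hscale : (Matrix.of ![v, d⁻¹ • w, x]).det = d⁻¹ * d := by
      rw [hddef]
      simp only [Matrix.det_fin_three, Matrix.of_apply, Matrix.cons_val', Matrix.cons_val_zero,
        Matrix.cons_val_one, Matrix.head_cons, Matrix.cons_val_two, Matrix.tail_cons,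
        Matrix.head_fin_const, Matrix.empty_val', Matrix.cons_val_fin_one, Pi.smul_apply,
        smul_eq_mul]
      ring
    rw [hscale, inv_mul_cancel₀ hd]
  set g : SL3 := ⟨(Matrix.of ![v, d⁻¹ • w, x])ᵀ, by rw [Matrix.det_transpose]; exact hdet1⟩
    with hgdef
  have hcol : ∀ i, (g : Matrix (Fin 3) (Fin 3) ℂ) i 0 = v i := by
    intro i; simp [hgdef, Matrix.transpose_apply]
  refine ⟨g, hcol, ?_⟩
  -- the third row of `g⁻¹` is `f`
  have hkey : f ᵥ* (g : Matrix (Fin 3) (Fin 3) ℂ) = Pi.single 2 1 := by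
    funext k
    simp only [Pi.smul_apply, smul_eq_mul] at hfw'
    rw [Fin.sum_univ_three] at hfv hfw' hfx
    fin_cases k <;>
      simp only [hgdef, Matrix.vecMul, dotProduct, Fin.sum_univ_three,
        Matrix.transpose_apply, Matrix.of_apply, Matrix.cons_val', Matrix.cons_val_zero,
        Matrix.cons_val_one, Matrix.head_cons, Matrix.cons_val_two, Matrix.tail_cons,
        Matrix.empty_val', Matrix.cons_val_fin_one, Matrix.head_fin_const,
        Pi.single_apply, Pi.smul_apply, smul_eq_mul, Fin.isValue]
    · simpa using hfv
    · simpa using hfw'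
    · simpa using hfx
  have hrow : f = ((g⁻¹ : SL3) : Matrix (Fin 3) (Fin 3) ℂ) 2 := by
    calc f = f ᵥ* 1 := (Matrix.vecMul_one f).symm
      _ = f ᵥ* ((g : Matrix (Fin 3) (Fin 3) ℂ) * ((g⁻¹ : SL3) : Matrix (Fin 3) (Fin 3) ℂ)) := by
          rw [coe_mul_inv]
      _ = (f ᵥ* (g : Matrix (Fin 3) (Fin 3) ℂ)) ᵥ* ((g⁻¹ : SL3) : Matrix (Fin 3) (Fin 3) ℂ) := by
          rw [Matrix.vecMul_vecMul]
      _ = Pi.single 2 1 ᵥ* ((g⁻¹ : SL3) : Matrix (Fin 3) (Fin 3) ℂ) := by rw [hkey]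
      _ = ((g⁻¹ : SL3) : Matrix (Fin 3) (Fin 3) ℂ) 2 :=
          Matrix.single_one_vecMul 2 _
  intro j
  exact (congrFun hrow j).symm

lemma mem_flag (g : SL3) :
    (fun i => (g : Matrix (Fin 3) (Fin 3) ℂ) i 0) ≠ 0 ∧
    (fun j => ((g⁻¹ : SL3) : Matrix (Fin 3) (Fin 3) ℂ) 2 j) ≠ 0 ∧
    ∑ i, ((g⁻¹ : SL3) : Matrix (Fin 3) (Fin 3) ℂ) 2 i * (g : Matrix (Fin 3) (Fin 3) ℂ) i 0
      = 0 := by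
  have h := coe_inv_mul g
  set N := ((g⁻¹ : SL3) : Matrix (Fin 3) (Fin 3) ℂ)
  set G := (g : Matrix (Fin 3) (Fin 3) ℂ)
  refine ⟨?_, ?_, ?_⟩
  · intro h0
    have e := entry_of_eq_one h 0 0
    have z : ∀ i, G i 0 = 0 := fun i => congrFun h0 i
    rw [z 0, z 1, z 2] at e
    simp at e
  · intro h0
    have e := entry_of_eq_one h 2 2
    have z : ∀ j, N 2 j = 0 := fun j => congrFun h0 j
    rw [z 0, z 1, z 2] at e
    simp at e
  · have e := entry_of_eq_one h 2 0
    rw [Fin.sum_univ_three]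
    simpa using e

lemma col_row_mul (g u : SL3)
    (h00 : (u : Matrix (Fin 3) (Fin 3) ℂ) 0 0 = 1)
    (h10 : (u : Matrix (Fin 3) (Fin 3) ℂ) 1 0 = 0)
    (h20 : (u : Matrix (Fin 3) (Fin 3) ℂ) 2 0 = 0)
    (k20 : ((u⁻¹ : SL3) : Matrix (Fin 3) (Fin 3) ℂ) 2 0 = 0)
    (k21 : ((u⁻¹ : SL3) : Matrix (Fin 3) (Fin 3) ℂ) 2 1 = 0)
    (k22 : ((u⁻¹ : SL3) : Matrix (Fin 3) (Fin 3) ℂ) 2 2 = 1) :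
    (∀ i, ((g * u : SL3) : Matrix (Fin 3) (Fin 3) ℂ) i 0
        = (g : Matrix (Fin 3) (Fin 3) ℂ) i 0) ∧
    (∀ j, (((g * u)⁻¹ : SL3) : Matrix (Fin 3) (Fin 3) ℂ) 2 j
        = ((g⁻¹ : SL3) : Matrix (Fin 3) (Fin 3) ℂ) 2 j) := by
  constructor
  · intro i
    rw [Matrix.SpecialLinearGroup.coe_mul, Matrix.mul_apply, Fin.sum_univ_three,
      h00, h10, h20]
    ring
  · intro j
    rw [_root_.mul_inv_rev, Matrix.SpecialLinearGroup.coe_mul, Matrix.mul_apply, Fin.sum_univ_three,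
      k20, k21, k22]
    ring

lemma mem_U_entries (g h : SL3)
    (hcol : ∀ i, (h : Matrix (Fin 3) (Fin 3) ℂ) i 0 = (g : Matrix (Fin 3) (Fin 3) ℂ) i 0)
    (hrow : ∀ j, ((h⁻¹ : SL3) : Matrix (Fin 3) (Fin 3) ℂ) 2 j
        = ((g⁻¹ : SL3) : Matrix (Fin 3) (Fin 3) ℂ) 2 j) :
    (((g⁻¹ * h : SL3) : Matrix (Fin 3) (Fin 3) ℂ) 1 0 = 0 ∧
     ((g⁻¹ * h : SL3) : Matrix (Fin 3) (Fin 3) ℂ) 2 0 = 0 ∧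
     ((g⁻¹ * h : SL3) : Matrix (Fin 3) (Fin 3) ℂ) 2 1 = 0 ∧
     ((g⁻¹ * h : SL3) : Matrix (Fin 3) (Fin 3) ℂ) 0 0 = 1 ∧
     ((g⁻¹ * h : SL3) : Matrix (Fin 3) (Fin 3) ℂ) 1 1 = 1 ∧
     ((g⁻¹ * h : SL3) : Matrix (Fin 3) (Fin 3) ℂ) 2 2 = 1) := by
  set u : SL3 := g⁻¹ * h with hudef
  -- first column of u is e₀
  have hucol : ∀ i, (u : Matrix (Fin 3) (Fin 3) ℂ) i 0 = if i = 0 then 1 else 0 := by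
    intro i
    have := entry_of_eq_one (coe_inv_mul g) i 0
    rw [hudef, Matrix.SpecialLinearGroup.coe_mul, Matrix.mul_apply, Fin.sum_univ_three,
      hcol 0, hcol 1, hcol 2]
    simpa using this
  -- third row of u⁻¹ is e₂
  have huinvrow : ∀ j, ((u⁻¹ : SL3) : Matrix (Fin 3) (Fin 3) ℂ) 2 j
      = if j = 2 then 1 else 0 := by
    intro j
    have hu : (u⁻¹ : SL3) = h⁻¹ * g := by rw [hudef, _root_.mul_inv_rev, inv_inv]
    have e := entry_of_eq_one (coe_inv_mul g) 2 j
    rw [hu, Matrix.SpecialLinearGroup.coe_mul, Matrix.mul_apply, Fin.sum_univ_three,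
      hrow 0, hrow 1, hrow 2]
    simpa [eq_comm] using e
  -- third row of u is e₂
  have hurow : ∀ j, (u : Matrix (Fin 3) (Fin 3) ℂ) 2 j = if j = 2 then 1 else 0 := by
    intro j
    have e := entry_of_eq_one (coe_inv_mul u) 2 j
    rw [huinvrow 0, huinvrow 1, huinvrow 2] at e
    simpa [eq_comm] using e
  have h10 : (u : Matrix (Fin 3) (Fin 3) ℂ) 1 0 = 0 := by simpa using hucol 1
  have h20 : (u : Matrix (Fin 3) (Fin 3) ℂ) 2 0 = 0 := by simpa using hucol 2
  have h00 : (u : Matrix (Fin 3) (Fin 3) ℂ) 0 0 = 1 := by simpa using hucol 0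
  have h21 : (u : Matrix (Fin 3) (Fin 3) ℂ) 2 1 = 0 := by simpa using hurow 1
  have h22 : (u : Matrix (Fin 3) (Fin 3) ℂ) 2 2 = 1 := by simpa using hurow 2
  have h11 : (u : Matrix (Fin 3) (Fin 3) ℂ) 1 1 = 1 := by
    have hdet := u.prop
    rw [Matrix.det_fin_three, h10, h20, h21, h00, h22] at hdet
    linear_combination hdet
  exact ⟨h10, h20, h21, h00, h11, h22⟩

end SL3FlagAux

open SL3FlagAux

set_option maxHeartbeats 1000000

/-- Correspondence (7) of the paper: the map sending `g ∈ SL(3,ℂ)` to the pair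
(first column of `g`, third row of `g⁻¹`) descends to the left-coset space
`SL(3,ℂ) / U`, where `U` is the subgroup of upper triangular matrices with
ones on the diagonal, and induces a bijection from `SL(3,ℂ) / U` onto the set
of pairs `(v, f)` with `v ≠ 0`, `f ≠ 0` and `f(v) = 0`. -/
theorem sl3_mod_unipotent_equiv_flag_pairs
    (U : Subgroup (Matrix.SpecialLinearGroup (Fin 3) ℂ))
    (hU : ∀ g : Matrix.SpecialLinearGroup (Fin 3) ℂ, g ∈ U ↔
      ((g : Matrix (Fin 3) (Fin 3) ℂ) 1 0 = 0 ∧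
       (g : Matrix (Fin 3) (Fin 3) ℂ) 2 0 = 0 ∧
       (g : Matrix (Fin 3) (Fin 3) ℂ) 2 1 = 0 ∧
       (g : Matrix (Fin 3) (Fin 3) ℂ) 0 0 = 1 ∧
       (g : Matrix (Fin 3) (Fin 3) ℂ) 1 1 = 1 ∧
       (g : Matrix (Fin 3) (Fin 3) ℂ) 2 2 = 1)) :
    ∃ e : (Matrix.SpecialLinearGroup (Fin 3) ℂ ⧸ U) →
      {p : (Fin 3 → ℂ) × (Fin 3 → ℂ) //
        p.1 ≠ 0 ∧ p.2 ≠ 0 ∧ ∑ i, p.2 i * p.1 i = 0},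
      Function.Bijective e ∧
      ∀ g : Matrix.SpecialLinearGroup (Fin 3) ℂ,
        (e (QuotientGroup.mk g)).val =
          ((fun i => (g : Matrix (Fin 3) (Fin 3) ℂ) i 0),
           (fun j => ((g⁻¹ : Matrix.SpecialLinearGroup (Fin 3) ℂ) :
             Matrix (Fin 3) (Fin 3) ℂ) 2 j)) := by
  set FF : SL3 → {p : (Fin 3 → ℂ) × (Fin 3 → ℂ) //
      p.1 ≠ 0 ∧ p.2 ≠ 0 ∧ ∑ i, p.2 i * p.1 i = 0} :=
    fun g => ⟨((fun i => (g : Matrix (Fin 3) (Fin 3) ℂ) i 0),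
      (fun j => ((g⁻¹ : SL3) : Matrix (Fin 3) (Fin 3) ℂ) 2 j)), mem_flag g⟩ with hFF
  have hresp : ∀ a b : SL3, (QuotientGroup.leftRel U) a b → FF a = FF b := by
    intro a b hab
    have hm : a⁻¹ * b ∈ U := (QuotientGroup.leftRel_apply).mp hab
    set u : SL3 := a⁻¹ * b with hu
    have hb : b = a * u := by rw [hu, mul_inv_cancel_left]
    obtain ⟨_, _, _, h00, _, _⟩ := (hU u).mp hm
    obtain ⟨k10, k20, k21, _, _, k22⟩ := (hU u⁻¹).mp (U.inv_mem hm)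
    obtain ⟨hc, hr⟩ := col_row_mul a u h00 ‹_› ‹_› k20 k21 k22
    rw [hFF, hb]
    exact (Subtype.ext (Prod.ext (funext hc) (funext hr))).symm
  refine ⟨Quotient.lift FF hresp, ⟨?_, ?_⟩, fun g => rfl⟩
  · intro a b
    refine Quotient.inductionOn₂ a b ?_
    intro g h heq
    have heq' : FF g = FF h := heq
    have hpair := congrArg Subtype.val heq'
    have hcol : ∀ i, (h : Matrix (Fin 3) (Fin 3) ℂ) i 0
        = (g : Matrix (Fin 3) (Fin 3) ℂ) i 0 :=
      fun i => (congrFun (congrArg Prod.fst hpair) i).symm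
    have hrow : ∀ j, ((h⁻¹ : SL3) : Matrix (Fin 3) (Fin 3) ℂ) 2 j
        = ((g⁻¹ : SL3) : Matrix (Fin 3) (Fin 3) ℂ) 2 j :=
      fun j => (congrFun (congrArg Prod.snd hpair) j).symm
    have hmem : g⁻¹ * h ∈ U := (hU _).mpr (mem_U_entries g h hcol hrow)
    exact Quotient.sound ((QuotientGroup.leftRel_apply).mpr hmem)
  · rintro ⟨⟨v, f⟩, hv, hf, hfv⟩
    obtain ⟨g, hgc, hgr⟩ := exists_rep v f hv hf hfv
    exact ⟨Quotient.mk _ g, Subtype.ext (Prod.ext (funext hgc) (funext hgr))⟩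
end
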